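/- Let α, β, δ, D ≥ 0 and C₁, C₂, C₃ > 0, and let f : [0,∞) → [0,∞) be Lebesgue integrable and satisfy: (i) f(0) ≤ C₁·D; (ii) f(τ') ≤ C₂·( f(τ) + (1+τ)^{−β}·D ) for all τ' ≥ τ ≥ 0; (iii) ∫_τ^∞ f(τ') dτ' ≤ C₃·( R^{−α}(1+τ)^{δ}·D + R·( f(τ) + (1+τ)^{−β}·D ) ) for all R, τ with 1 ≤ R ≤ τ. Then for every η > 0 there exists a constant C > 0, depending only on α, β, η, C₁, C₂, C₃ (and not on δ or D), such that f(τ) ≤ C·(1+τ)^{−min(β, α+1) + δ + η}·D for all τ ≥ 0. -/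

import Mathlib

open MeasureTheory Set

noncomputable section


/-- The bundled hypothesis/conclusion predicate for the bootstrap. -/
def GoodBound (α β C₁ C₂ C₃ A e : ℝ) : Prop :=
  ∀ δ D : ℝ, 0 ≤ δ → 0 ≤ D →
  ∀ f : ℝ → ℝ, (∀ τ, 0 ≤ f τ) → IntegrableOn f (Set.Ici (0:ℝ)) →
    f 0 ≤ C₁ * D →
    (∀ τ τ' : ℝ, 0 ≤ τ → τ ≤ τ' → f τ' ≤ C₂ * (f τ + (1 + τ) ^ (-β) * D)) →
    (∀ R τ : ℝ, 1 ≤ R → R ≤ τ →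
      (∫ τ' in Set.Ioi τ, f τ')
        ≤ C₃ * (R ^ (-α) * (1 + τ) ^ δ * D + R * (f τ + (1 + τ) ^ (-β) * D))) →
    ∀ τ : ℝ, 0 ≤ τ → f τ ≤ A * (1 + τ) ^ (-e + δ) * D

/-- Pigeonhole: some point of `[σ,2σ]` has value at most twice the average. -/
lemma pigeon (f : ℝ → ℝ) (hf : ∀ x, 0 ≤ f x) (hInt : IntegrableOn f (Set.Ici (0:ℝ)))
    (σ : ℝ) (hσ : 1 ≤ σ) :
    ∃ s, σ ≤ s ∧ s ≤ 2*σ ∧ f s ≤ (2/σ) * ∫ x in Set.Ioi σ, f x := by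
  by_contra h
  push_neg at h
  set I := ∫ x in Set.Ioi σ, f x with hI
  have hσ0 : (0:ℝ) < σ := lt_of_lt_of_le one_pos hσ
  have hsub : Set.Ioi σ ⊆ Set.Ici (0:ℝ) := fun x hx => le_of_lt (lt_trans hσ0 hx)
  have hIntIoi : IntegrableOn f (Set.Ioi σ) := hInt.mono_set hsub
  have hIntIoc : IntegrableOn f (Set.Ioc σ (2*σ)) := hIntIoi.mono_set Set.Ioc_subset_Ioi_self
  have hI0 : 0 ≤ I := setIntegral_nonneg measurableSet_Ioi (fun x _ => hf x)
  have hvol : (volume (Set.Ioc σ (2*σ))).toReal = σ := by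
    rw [Real.volume_Ioc, ENNReal.toReal_ofReal (by linarith)]
    ring
  have h2 : ∫ _x in Set.Ioc σ (2*σ), (2/σ)*I ≤ ∫ x in Set.Ioc σ (2*σ), f x := by
    refine setIntegral_mono_on (integrableOn_const ?_) hIntIoc measurableSet_Ioc ?_
    · rw [Real.volume_Ioc]; exact ENNReal.ofReal_lt_top.ne
    · intro x hx
      exact (h x (le_of_lt hx.1) hx.2).le
  rw [setIntegral_const, measureReal_def, hvol, smul_eq_mul] at h2
  have h2' : 2 * I ≤ ∫ x in Set.Ioc σ (2*σ), f x := by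
    have : σ * (2/σ*I) = 2*I := by field_simp
    linarith [h2, this.symm.le]
  have h3 : ∫ x in Set.Ioc σ (2*σ), f x ≤ I := by
    refine setIntegral_mono_set hIntIoi ?_ (HasSubset.Subset.eventuallyLE Set.Ioc_subset_Ioi_self)
    exact Filter.Eventually.of_forall (fun x => hf x)
  have hIzero : I = 0 := le_antisymm (by linarith) hI0
  have hioc0 : ∫ x in Set.Ioc σ (2*σ), f x = 0 := by
    have h4 : 0 ≤ ∫ x in Set.Ioc σ (2*σ), f x :=
      setIntegral_nonneg measurableSet_Ioc (fun x _ => hf x)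
    rw [hIzero] at h3
    linarith
  have hpos : 0 < ∫ x in Set.Ioc σ (2*σ), f x := by
    rw [setIntegral_pos_iff_support_of_nonneg_ae
      (Filter.Eventually.of_forall (fun x => hf x)) hIntIoc]
    have hsupp : Set.Ioc σ (2*σ) ⊆ Function.support f := by
      intro x hx
      have := h x (le_of_lt hx.1) hx.2
      rw [hIzero] at this
      simp only [mul_zero] at this
      exact ne_of_gt this
    have : Function.support f ∩ Set.Ioc σ (2*σ) = Set.Ioc σ (2*σ) := by
      rw [Set.inter_eq_right]; exact hsupp
    rw [this, Real.volume_Ioc]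
    rw [ENNReal.ofReal_pos]
    linarith
  exact absurd hioc0 (ne_of_gt hpos)

/-- Comparing `a^x` and `b^x` for comparable bases. -/
lemma rpow_twice (a b x c : ℝ) (ha : 0 < a) (hab : a ≤ b) (hb2 : b ≤ 2*a)
    (hc : 0 ≤ c) (hx : -c ≤ x) : a ^ x ≤ 2 ^ c * b ^ x := by
  have hb : 0 < b := lt_of_lt_of_le ha hab
  rcases le_or_gt 0 x with hx0 | hx0
  · calc a ^ x ≤ b ^ x := Real.rpow_le_rpow ha.le hab hx0
      _ ≤ 2 ^ c * b ^ x :=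
        le_mul_of_one_le_left (Real.rpow_nonneg hb.le x) (Real.one_le_rpow one_le_two hc)
  · have h1 : (2*a) ^ x ≤ b ^ x := Real.rpow_le_rpow_of_nonpos hb hb2 hx0.le
    have h2 : (2*a) ^ x = 2 ^ x * a ^ x := Real.mul_rpow (by norm_num) ha.le
    have h3 : (2:ℝ) ^ (-x) * 2 ^ x = 1 := by
      rw [← Real.rpow_add (by norm_num)]; simp
    have h4 : a ^ x = 2 ^ (-x) * ((2*a) ^ x) := by
      rw [h2, ← mul_assoc, h3, one_mul]
    rw [h4]
    have h5 : (2:ℝ) ^ (-x) ≤ 2 ^ c := Real.rpow_le_rpow_of_exponent_le one_le_two (by linarith)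
    have h6 : (2*a) ^ x ≤ b ^ x := h1
    have h7 : (0:ℝ) ≤ (2*a) ^ x := Real.rpow_nonneg (by linarith) x
    calc 2 ^ (-x) * (2*a) ^ x ≤ 2 ^ c * (2*a) ^ x := mul_le_mul_of_nonneg_right h5 h7
      _ ≤ 2 ^ c * b ^ x := mul_le_mul_of_nonneg_left h6 (Real.rpow_nonneg (by norm_num) c)

lemma good_base (α β C₁ C₂ C₃ : ℝ) (hC₂ : 0 < C₂) :
    GoodBound α β C₁ C₂ C₃ (C₂*(C₁+1)) 0 := by
  intro δ D hδ hD f hf hInt h0 hii _hiii τ hτ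
  have h1 : f τ ≤ C₂ * (f 0 + (1 + 0:ℝ) ^ (-β) * D) := hii 0 τ le_rfl hτ
  have h2 : ((1:ℝ) + 0) ^ (-β) = 1 := by
    norm_num
  rw [h2, one_mul] at h1
  have h3 : (1:ℝ) ≤ (1 + τ) ^ (-(0:ℝ) + δ) := by
    rw [neg_zero, zero_add]
    exact Real.one_le_rpow (by linarith) hδ
  have h4 : f τ ≤ C₂ * (C₁ + 1) * D := by nlinarith [hf τ]
  calc f τ ≤ C₂ * (C₁+1) * D := h4
    _ ≤ C₂ * (C₁+1) * (1+τ) ^ (-(0:ℝ)+δ) * D := by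
        rcases le_or_gt D 0 with hD0 | hD0
        · have : D = 0 := le_antisymm hD0 hD
          simp [this]
        · nlinarith [mul_pos (mul_pos hC₂ (by nlinarith [hf 0] : (0:ℝ) < C₁+1)) hD0]

def eseq (α β : ℝ) : ℕ → ℝ
  | 0 => 0
  | n+1 => min β (1 + eseq α β n * α / (α+1))

lemma eseq_eq (α β : ℝ) (hα : 0 ≤ α) (hβ : 0 ≤ β) :
    ∀ n, eseq α β n = min β ((α+1) * (1 - (α/(α+1))^n)) := by
  have hα1 : (0:ℝ) < α + 1 := by linarith
  have hr0 : 0 ≤ α/(α+1) := by positivity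
  have hr1 : α/(α+1) < 1 := (div_lt_one hα1).2 (by linarith)
  set r := α/(α+1) with hr
  have hu : ∀ n, (α+1) * (1 - r^n) = (α+1) - (α+1)*r^n := by intro n; ring
  have hrpow : ∀ n, (0:ℝ) ≤ r^n := fun n => pow_nonneg hr0 n
  have hrpow1 : ∀ n, r^n ≤ 1 := fun n => pow_le_one₀ hr0 hr1.le
  have hun : ∀ n, 0 ≤ (α+1) * (1 - r^n) := fun n => by nlinarith [hrpow1 n]
  have hua : ∀ n, (α+1) * (1 - r^n) ≤ α+1 := fun n => by nlinarith [hrpow n]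
  have humono : ∀ n, (α+1) * (1 - r^n) ≤ (α+1) * (1 - r^(n+1)) := by
    intro n
    have : r^(n+1) ≤ r^n := pow_le_pow_of_le_one hr0 hr1.le (Nat.le_succ n)
    nlinarith
  have hrec : ∀ n, (α+1) * (1 - r^(n+1)) = 1 + ((α+1) * (1 - r^n)) * α / (α+1) := by
    intro n
    have h1 : ((α+1) * (1 - r^n)) * α / (α+1) = (1 - r^n) * α := by
      field_simp
    rw [h1, pow_succ, hr]
    field_simp
    ring
  intro n
  induction n with
  | zero => simp [eseq, hβ]
  | succ n ih =>
    rw [eseq, ih]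
    rcases le_total ((α+1) * (1 - r^n)) β with hle | hle
    · rw [min_eq_right hle, ← hrec n]
    · rw [min_eq_left hle]
      have h1 : β ≤ 1 + β * α / (α+1) := by
        have hb : β ≤ α + 1 := le_trans hle (hua n)
        rw [← sub_nonneg]
        have heq : 1 + β * α / (α + 1) - β = (α + 1 - β) / (α+1) := by field_simp; ring
        rw [heq]
        have : 0 ≤ α + 1 - β := by linarith
        positivity
      rw [min_eq_left h1]
      have h2 : β ≤ (α+1) * (1 - r^(n+1)) := le_trans hle (humono n)
      rw [min_eq_left h2]
set_option maxHeartbeats 1000000 in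
lemma good_step (α β C₁ C₂ C₃ : ℝ) (hα : 0 ≤ α) (hβ : 0 ≤ β)
    (hC₁ : 0 < C₁) (hC₂ : 0 < C₂) (hC₃ : 0 < C₃)
    (e A : ℝ) (he0 : 0 ≤ e) (heβ : e ≤ β) (heα : e ≤ α+1) (hA : 0 < A)
    (hG : GoodBound α β C₁ C₂ C₃ A e) :
    ∃ A' > 0, GoodBound α β C₁ C₂ C₃ A' (min β (1 + e*α/(α+1))) := by
  have hα1 : (0:ℝ) < α + 1 := by linarith
  rcases eq_or_lt_of_le heα with heq | hlt
  · have h1 : 1 + e*α/(α+1) = e := by rw [heq]; field_simp; ring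
    rw [h1, min_eq_right heβ]
    exact ⟨A, hA, hG⟩
  · set θ := e/(α+1) with hθ
    have hθ0 : 0 ≤ θ := by positivity
    have hθ1 : θ < 1 := (div_lt_one hα1).2 hlt
    set e' := min β (1 + e*α/(α+1)) with he'
    have hg0 : 0 ≤ e*α/(α+1) := by positivity
    have he'0 : 0 ≤ e' := le_min hβ (by linarith)
    have he'β : e' ≤ β := min_le_left _ _
    have he'1 : e' ≤ 1 + e*α/(α+1) := min_le_right _ _
    have hgα : e*α/(α+1) ≤ α := by
      rw [div_le_iff₀ hα1]; nlinarith
    have he'α : e' ≤ α + 1 := by linarith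
    have hθe : θ - e = -(e*α/(α+1)) := by rw [hθ]; field_simp; ring
    set S := (2:ℝ)^((1-θ)⁻¹) with hS
    have hS1 : (1:ℝ) ≤ S := Real.one_le_rpow one_le_two (inv_nonneg.2 (by linarith))
    set T := 2*S with hT
    have hT2 : (2:ℝ) ≤ T := by linarith
    set K := C₂*(C₁+1) with hK
    have hKpos : 0 < K := by positivity
    set A' := max (K * (1+T)^(α+1)) (C₂*(6*C₃*(A+2)+1) * 2^(α+1)) with hA'
    have hA'pos : 0 < A' :=
      lt_of_lt_of_le (by positivity : (0:ℝ) < K*(1+T)^(α+1)) (le_max_left _ _)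
    refine ⟨A', hA'pos, ?_⟩
    intro δ D hδ hD f hf hInt h0 hii hiii τ hτ
    have hbase : (1:ℝ) ≤ 1+τ := by linarith
    have hKbound : ∀ t, 0 ≤ t → f t ≤ K * D := by
      intro t ht
      have h1 := hii 0 t le_rfl ht
      have h2 : ((1:ℝ)+0)^(-β) = 1 := by norm_num
      rw [h2, one_mul] at h1
      calc f t ≤ C₂*(f 0 + D) := h1
        _ ≤ K*D := by rw [hK]; nlinarith
    rcases le_or_gt τ T with hsmall | hbig
    · -- small τ
      have hT1 : (1:ℝ) ≤ 1+T := by linarith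
      have h1 : (1+T)^(-(α+1)) ≤ (1+τ)^(-e'+δ) :=
        calc (1+T)^(-(α+1)) ≤ (1+T)^(-e') :=
              Real.rpow_le_rpow_of_exponent_le hT1 (by linarith)
          _ ≤ (1+τ)^(-e') :=
              Real.rpow_le_rpow_of_nonpos (by linarith) (by linarith) (by linarith)
          _ ≤ (1+τ)^(-e'+δ) := Real.rpow_le_rpow_of_exponent_le hbase (by linarith)
      have hcancel : (1+T)^(α+1) * (1+T)^(-(α+1)) = 1 := by
        rw [← Real.rpow_add (by linarith), show α+1 + -(α+1) = (0:ℝ) by ring, Real.rpow_zero]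
      calc f τ ≤ K*D := hKbound τ hτ
        _ = K*(1+T)^(α+1)*((1+T)^(-(α+1)))*D := by
            rw [show K*(1+T)^(α+1)*((1+T)^(-(α+1)))*D
                = K*((1+T)^(α+1)*(1+T)^(-(α+1)))*D by ring, hcancel, mul_one]
        _ ≤ K*(1+T)^(α+1)*((1+τ)^(-e'+δ))*D :=
            mul_le_mul_of_nonneg_right
              (mul_le_mul_of_nonneg_left h1 (by positivity)) hD
        _ ≤ A'*(1+τ)^(-e'+δ)*D :=
            mul_le_mul_of_nonneg_right
              (mul_le_mul_of_nonneg_right (le_max_left _ _)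
                (Real.rpow_nonneg (by linarith) _)) hD
    · -- large τ
      set σ := τ/2 with hσdef
      have hσS : S ≤ σ := by rw [hσdef]; rw [hT] at hbig; linarith
      have hσ1 : (1:ℝ) ≤ σ := le_trans hS1 hσS
      have hσ0 : (0:ℝ) < σ := by linarith
      have hbσ0 : (0:ℝ) < 1+σ := by linarith
      have hbσ1 : (1:ℝ) ≤ 1+σ := by linarith
      have hτσ : τ = 2*σ := by rw [hσdef]; ring
      have hth : (1+σ)^θ ≤ σ := by
        have h2 : (1+σ)^θ ≤ (2*σ)^θ := Real.rpow_le_rpow (by linarith) (by linarith) hθ0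
        have h3 : (2*σ)^θ = 2^θ * σ^θ := Real.mul_rpow (by norm_num) hσ0.le
        have h4 : (2:ℝ)^θ ≤ 2 := by
          calc (2:ℝ)^θ ≤ 2^(1:ℝ) := Real.rpow_le_rpow_of_exponent_le one_le_two hθ1.le
            _ = 2 := Real.rpow_one 2
        have h5 : (2:ℝ) ≤ σ^(1-θ) := by
          calc (2:ℝ) = 2^((1-θ)⁻¹*(1-θ)) := by
                rw [inv_mul_cancel₀ (by linarith : (1:ℝ)-θ ≠ 0), Real.rpow_one]
            _ = S^(1-θ) := by rw [hS, ← Real.rpow_mul (by norm_num)]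
            _ ≤ σ^(1-θ) := Real.rpow_le_rpow (by positivity) hσS (by linarith)
        have h6 : σ^θ * σ^(1-θ) = σ := by
          rw [← Real.rpow_add hσ0]; norm_num
        have k0 : (0:ℝ) ≤ σ^θ := Real.rpow_nonneg hσ0.le θ
        have k1 : 2^θ*σ^θ ≤ 2*σ^θ := mul_le_mul_of_nonneg_right h4 k0
        have k2 : 2*σ^θ ≤ σ^(1-θ)*σ^θ := mul_le_mul_of_nonneg_right h5 k0
        have k3 : σ^(1-θ)*σ^θ = σ := by rw [mul_comm]; exact h6
        linarith [h2, h3.le, h3.ge]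
      set R := (1+σ)^θ with hR
      have hR1 : 1 ≤ R := Real.one_le_rpow hbσ1 hθ0
      set I := ∫ x in Set.Ioi σ, f x with hI
      obtain ⟨s, hs1, hs2, hs3⟩ := pigeon f hf hInt σ hσ1
      have hiiiσ := hiii R σ hR1 hth
      rw [← hI] at hiiiσ
      have hRα : R^(-α) = (1+σ)^(-(e*α/(α+1))) := by
        rw [hR, ← Real.rpow_mul (by linarith)]
        congr 1
        rw [hθ]; ring
      have hGσ : f σ ≤ A*(1+σ)^(-e+δ)*D := hG δ D hδ hD f hf hInt h0 hii hiii σ hσ0.le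
      have hβσ : (1+σ)^(-β) ≤ (1+σ)^(-e+δ) :=
        Real.rpow_le_rpow_of_exponent_le hbσ1 (by linarith)
      have hsum : f σ + (1+σ)^(-β)*D ≤ (A+1)*((1+σ)^(-e+δ))*D := by
        have h7 : (1+σ)^(-β)*D ≤ (1+σ)^(-e+δ)*D := mul_le_mul_of_nonneg_right hβσ hD
        have h8 : (A+1)*((1+σ)^(-e+δ))*D = A*(1+σ)^(-e+δ)*D + (1+σ)^(-e+δ)*D := by ring
        rw [h8]
        exact add_le_add hGσ h7
      have hIb : I ≤ C₃*(A+2)*(1+σ)^(δ - e*α/(α+1))*D := by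
        have t1 : R^(-α)*(1+σ)^δ*D = (1+σ)^(δ - e*α/(α+1))*D := by
          rw [hRα, ← Real.rpow_add hbσ0, show -(e*α/(α+1))+δ = δ - e*α/(α+1) by ring]
        have t2 : R*((A+1)*((1+σ)^(-e+δ))*D) = (A+1)*(1+σ)^(δ - e*α/(α+1))*D := by
          rw [hR, show (1+σ)^θ*((A+1)*((1+σ)^(-e+δ))*D)
              = (A+1)*((1+σ)^θ*(1+σ)^(-e+δ))*D by ring, ← Real.rpow_add hbσ0,
            show θ + (-e+δ) = δ - e*α/(α+1) by linarith [hθe]]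
        have t3 : R*(f σ + (1+σ)^(-β)*D) ≤ R*((A+1)*((1+σ)^(-e+δ))*D) :=
          mul_le_mul_of_nonneg_left hsum (by positivity)
        calc I ≤ C₃*(R^(-α)*(1+σ)^δ*D + R*(f σ + (1+σ)^(-β)*D)) := hiiiσ
          _ ≤ C₃*((1+σ)^(δ - e*α/(α+1))*D + (A+1)*(1+σ)^(δ - e*α/(α+1))*D) :=
              mul_le_mul_of_nonneg_left
                (add_le_add (le_of_eq t1) (le_trans t3 (le_of_eq t2))) hC₃.le
          _ = C₃*(A+2)*(1+σ)^(δ - e*α/(α+1))*D := by ring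
      have hβs : (1+s)^(-β) ≤ (1+σ)^(-β) :=
        Real.rpow_le_rpow_of_nonpos hbσ0 (by linarith) (by linarith)
      have hfτ : f τ ≤ C₂*(f s + (1+s)^(-β)*D) :=
        hii s τ (by linarith) (by rw [hτσ]; exact hs2)
      -- bound f s
      have hfs2 : f s ≤ 6*C₃*(A+2)*(1+σ)^(δ - e*α/(α+1) - 1)*D := by
        have h2σ : 2/σ ≤ 6/(1+σ) := by
          rw [div_le_div_iff₀ hσ0 hbσ0]; linarith
        have hI0 : 0 ≤ I := setIntegral_nonneg measurableSet_Ioi (fun x _ => hf x)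
        have c1 : f s ≤ (6/(1+σ))*I := by
          calc f s ≤ (2/σ)*I := hs3
            _ ≤ (6/(1+σ))*I := mul_le_mul_of_nonneg_right h2σ hI0
        have c2 : (6/(1+σ))*I ≤ (6/(1+σ))*(C₃*(A+2)*(1+σ)^(δ - e*α/(α+1))*D) :=
          mul_le_mul_of_nonneg_left hIb (by positivity)
        have c3 : (6/(1+σ))*(C₃*(A+2)*(1+σ)^(δ - e*α/(α+1))*D)
            = 6*C₃*(A+2)*(1+σ)^(δ - e*α/(α+1) - 1)*D := by
          rw [show δ - e*α/(α+1) - 1 = (-1) + (δ - e*α/(α+1)) by ring,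
            Real.rpow_add hbσ0, Real.rpow_neg_one]
          field_simp
        linarith
      have hexp1 : (1+σ)^(δ - e*α/(α+1) - 1) ≤ (1+σ)^(-e'+δ) :=
        Real.rpow_le_rpow_of_exponent_le hbσ1 (by linarith)
      have hexp2 : (1+σ)^(-β) ≤ (1+σ)^(-e'+δ) :=
        Real.rpow_le_rpow_of_exponent_le hbσ1 (by linarith)
      have hmid : f τ ≤ C₂*(6*C₃*(A+2)+1)*(1+σ)^(-e'+δ)*D := by
        have p1 : (0:ℝ) ≤ (1+σ)^(-e'+δ) := Real.rpow_nonneg hbσ0.le _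
        have p2 : f s ≤ 6*C₃*(A+2)*(1+σ)^(-e'+δ)*D := by
          have := mul_le_mul_of_nonneg_right
            (mul_le_mul_of_nonneg_left hexp1 (by positivity : (0:ℝ) ≤ 6*C₃*(A+2))) hD
          calc f s ≤ 6*C₃*(A+2)*(1+σ)^(δ - e*α/(α+1) - 1)*D := hfs2
            _ ≤ 6*C₃*(A+2)*(1+σ)^(-e'+δ)*D := by
                rw [show 6*C₃*(A+2)*(1+σ)^(δ - e*α/(α+1) - 1)*D
                  = 6*C₃*(A+2)*((1+σ)^(δ - e*α/(α+1) - 1))*D by ring]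
                exact this
        have p3 : (1+s)^(-β)*D ≤ (1+σ)^(-e'+δ)*D :=
          mul_le_mul_of_nonneg_right (le_trans hβs hexp2) hD
        calc f τ ≤ C₂*(f s + (1+s)^(-β)*D) := hfτ
          _ ≤ C₂*(6*C₃*(A+2)*(1+σ)^(-e'+δ)*D + (1+σ)^(-e'+δ)*D) :=
              mul_le_mul_of_nonneg_left (add_le_add p2 p3) hC₂.le
          _ = C₂*(6*C₃*(A+2)+1)*(1+σ)^(-e'+δ)*D := by ring
      have hfinal : (1+σ)^(-e'+δ) ≤ 2^(α+1)*(1+τ)^(-e'+δ) := by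
        refine rpow_twice (1+σ) (1+τ) (-e'+δ) (α+1) hbσ0 (by linarith) (by linarith)
          (by linarith) (by linarith)
      calc f τ ≤ C₂*(6*C₃*(A+2)+1)*(1+σ)^(-e'+δ)*D := hmid
        _ ≤ C₂*(6*C₃*(A+2)+1)*(2^(α+1)*(1+τ)^(-e'+δ))*D :=
            mul_le_mul_of_nonneg_right
              (mul_le_mul_of_nonneg_left hfinal (by positivity)) hD
        _ = (C₂*(6*C₃*(A+2)+1)*2^(α+1))*(1+τ)^(-e'+δ)*D := by rw [← mul_assoc]
        _ ≤ A'*(1+τ)^(-e'+δ)*D := by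
            have hle : C₂*(6*C₃*(A+2)+1)*2^(α+1) ≤ A' := by
              rw [hA']; exact le_max_right _ _
            exact mul_le_mul_of_nonneg_right
              (mul_le_mul_of_nonneg_right hle (Real.rpow_nonneg (by linarith) _)) hD

/-- Abstract interpolation lemma: a nonnegative integrable function on `[0,∞)` satisfying
an initial bound, an energy-boundedness bound, and an integrated (dyadic) bound with an
interpolation parameter `R`, decays at the rate `(1+τ)^{-min(β,α+1)+δ+η}`.  The constant in
the conclusion depends only on `α`, `β`, `η` and the constants `C₁`, `C₂`, `C₃` in the
hypotheses (and not on `δ`, `D` or `f`). -/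
theorem abstract_interpolation_lemma
    (α β : ℝ) (hα : 0 ≤ α) (hβ : 0 ≤ β)
    (C₁ C₂ C₃ : ℝ) (hC₁ : 0 < C₁) (hC₂ : 0 < C₂) (hC₃ : 0 < C₃)
    (η : ℝ) (hη : 0 < η) :
    ∃ C > (0:ℝ),
      ∀ δ D : ℝ, 0 ≤ δ → 0 ≤ D →
      ∀ f : ℝ → ℝ, (∀ τ, 0 ≤ f τ) → IntegrableOn f (Set.Ici (0:ℝ)) →
        f 0 ≤ C₁ * D →
        (∀ τ τ' : ℝ, 0 ≤ τ → τ ≤ τ' → f τ' ≤ C₂ * (f τ + (1 + τ) ^ (-β) * D)) →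
        (∀ R τ : ℝ, 1 ≤ R → R ≤ τ →
          (∫ τ' in Set.Ioi τ, f τ')
            ≤ C₃ * (R ^ (-α) * (1 + τ) ^ δ * D + R * (f τ + (1 + τ) ^ (-β) * D))) →
        ∀ τ : ℝ, 0 ≤ τ →
          f τ ≤ C * (1 + τ) ^ (-min β (α + 1) + δ + η) * D := by
  have hα1 : (0:ℝ) < α + 1 := by linarith
  set r := α/(α+1) with hr
  have hr0 : 0 ≤ r := by positivity
  have hr1 : r < 1 := (div_lt_one hα1).2 (by linarith)
  have heq := eseq_eq α β hα hβ
  have hrpow1 : ∀ n, r^n ≤ 1 := fun n => pow_le_one₀ hr0 hr1.le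
  have hrpow0 : ∀ n, (0:ℝ) ≤ r^n := fun n => pow_nonneg hr0 n
  have hinv : ∀ n, 0 ≤ eseq α β n ∧ eseq α β n ≤ β ∧ eseq α β n ≤ α+1 := by
    intro n
    rw [heq n]
    refine ⟨le_min hβ (by nlinarith [hrpow1 n]), min_le_left _ _, ?_⟩
    exact le_trans (min_le_right _ _) (by nlinarith [hrpow0 n])
  have hGood : ∀ n, ∃ A > (0:ℝ), GoodBound α β C₁ C₂ C₃ A (eseq α β n) := by
    intro n
    induction n with
    | zero =>
      refine ⟨C₂*(C₁+1), by positivity, ?_⟩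
      have h0 : eseq α β 0 = 0 := rfl
      rw [h0]
      exact good_base α β C₁ C₂ C₃ hC₂
    | succ n ih =>
      obtain ⟨A, hA, hG⟩ := ih
      obtain ⟨A', hA', hG'⟩ := good_step α β C₁ C₂ C₃ hα hβ hC₁ hC₂ hC₃
        (eseq α β n) A (hinv n).1 (hinv n).2.1 (hinv n).2.2 hA hG
      refine ⟨A', hA', ?_⟩
      have h1 : eseq α β (n+1) = min β (1 + eseq α β n * α/(α+1)) := rfl
      rw [h1]
      exact hG'
  obtain ⟨N, hN⟩ := exists_pow_lt_of_lt_one (show (0:ℝ) < η/(α+1) by positivity) hr1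
  obtain ⟨A, hApos, hG⟩ := hGood N
  refine ⟨A, hApos, ?_⟩
  intro δ D hδ hD f hf hInt h0 hii hiii τ hτ
  have h1 : f τ ≤ A * (1+τ)^(-(eseq α β N)+δ)*D := hG δ D hδ hD f hf hInt h0 hii hiii τ hτ
  have hηN : (α+1)*r^N < η := by
    rw [lt_div_iff₀ hα1] at hN
    linarith
  have hkey : min β (α+1) - eseq α β N ≤ η := by
    rw [heq N]
    rcases le_total ((α+1)*(1-r^N)) β with hc | hc
    · rw [min_eq_right hc]
      have := min_le_right β (α+1)
      nlinarith
    · rw [min_eq_left hc]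
      have := min_le_left β (α+1)
      linarith
  have hmono : (1+τ)^(-(eseq α β N)+δ) ≤ (1+τ)^(-min β (α+1)+δ+η) :=
    Real.rpow_le_rpow_of_exponent_le (by linarith) (by linarith)
  calc f τ ≤ A * (1+τ)^(-(eseq α β N)+δ)*D := h1
    _ ≤ A * (1+τ)^(-min β (α+1)+δ+η)*D :=
        mul_le_mul_of_nonneg_right (mul_le_mul_of_nonneg_left hmono hApos.le) hD

end
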